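/- Let G be a nontrivial connected graph with blocks B_1, …, B_t. Then pd(G) = max{pd(B_i) : i = 1, …, t}. -/

import Mathlib

open SimpleGraph

variable {V : Type*}

/-- Two edges are adjacent: distinct and sharing an endpoint. -/
def EdgesAdj (e₁ e₂ : Sym2 V) : Prop := e₁ ≠ e₂ ∧ ∃ v, v ∈ e₁ ∧ v ∈ e₂

/-- `F` is an edge-cut of `G` separating `x` and `y`. -/
def IsSepCut (G : SimpleGraph V) (F : Set (Sym2 V)) (x y : V) : Prop :=
  F ⊆ G.edgeSet ∧ ¬ (G.deleteEdges F).Reachable x y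

/-- `F` is a proper edge-cut (w.r.t. edge-coloring `c`) separating `x` and `y`. -/
def IsProperSepCut (G : SimpleGraph V) (c : Sym2 V → ℕ) (F : Set (Sym2 V)) (x y : V) : Prop :=
  IsSepCut G F x y ∧ ∀ e₁ ∈ F, ∀ e₂ ∈ F, EdgesAdj e₁ e₂ → c e₁ ≠ c e₂

/-- `F` is a rainbow edge-cut separating `x` and `y`. -/
def IsRainbowSepCut (G : SimpleGraph V) (c : Sym2 V → ℕ) (F : Set (Sym2 V)) (x y : V) : Prop :=
  IsSepCut G F x y ∧ Set.InjOn c F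

/-- `F` is a matching cut separating `x` and `y`. -/
def IsMatchingSepCut (G : SimpleGraph V) (F : Set (Sym2 V)) (x y : V) : Prop :=
  IsSepCut G F x y ∧ ∀ e₁ ∈ F, ∀ e₂ ∈ F, ¬ EdgesAdj e₁ e₂

/-- The proper disconnection number. -/
noncomputable def pd (G : SimpleGraph V) : ℕ :=
  sInf {k | ∃ c : Sym2 V → ℕ, (∀ e ∈ G.edgeSet, c e < k) ∧
    ∀ x y : V, x ≠ y → ∃ F, IsProperSepCut G c F x y}

/-- The rainbow disconnection number. -/
noncomputable def rd (G : SimpleGraph V) : ℕ :=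
  sInf {k | ∃ c : Sym2 V → ℕ, (∀ e ∈ G.edgeSet, c e < k) ∧
    ∀ x y : V, x ≠ y → ∃ F, IsRainbowSepCut G c F x y}

/-- The chromatic index. -/
noncomputable def chromIndex (G : SimpleGraph V) : ℕ :=
  sInf {k | ∃ c : Sym2 V → ℕ, (∀ e ∈ G.edgeSet, c e < k) ∧
    ∀ e₁ ∈ G.edgeSet, ∀ e₂ ∈ G.edgeSet, EdgesAdj e₁ e₂ → c e₁ ≠ c e₂}

/-- A subgraph is "cut-free" if it is connected and has no cut vertex. -/
def CutFree {V : Type*} (G : SimpleGraph V) (H : G.Subgraph) : Prop :=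
  H.coe.Connected ∧ ∀ v ∈ H.verts, H.verts = {v} ∨ (H.deleteVerts {v}).coe.Connected

/-- A block: a maximal connected subgraph without cut vertices. -/
def IsBlock {V : Type*} (G : SimpleGraph V) (H : G.Subgraph) : Prop :=
  CutFree G H ∧ ∀ H' : G.Subgraph, H ≤ H' → CutFree G H' → H' = H



-- finiteness of subgraphs
instance sgFinite [Finite V] (G : SimpleGraph V) : Finite G.Subgraph := by
  refine Finite.of_injective
    (fun H => ((H.verts, {p : V × V | H.Adj p.1 p.2}) : Set V × Set (V × V))) ?_
  rintro H K h
  simp only [Prod.mk.injEq] at h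
  ext x y
  · exact Set.ext_iff.mp h.1 x
  · exact Set.ext_iff.mp h.2 (x, y)

lemma singleton_connected {G : SimpleGraph V} (H : G.Subgraph) (x : V)
    (h : H.verts = {x}) : H.coe.Connected := by
  have : Nonempty H.verts := ⟨⟨x, by simp [h]⟩⟩
  refine ⟨fun u v => ?_⟩
  have hu : (u : V) = x := (Set.ext_iff.mp h _).mp u.2
  have hv : (v : V) = x := (Set.ext_iff.mp h _).mp v.2
  have : u = v := Subtype.ext (hu.trans hv.symm)
  exact this ▸ Reachable.refl _

lemma sup_deleteVerts {G : SimpleGraph V} (H K : G.Subgraph) (s : Set V) :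
    (H ⊔ K).deleteVerts s = H.deleteVerts s ⊔ K.deleteVerts s := by
  ext x y
  · simp only [Subgraph.deleteVerts_verts, Subgraph.verts_sup]
    constructor
    · rintro ⟨h | h, hs⟩
      · exact Or.inl ⟨h, hs⟩
      · exact Or.inr ⟨h, hs⟩
    · rintro (⟨h, hs⟩ | ⟨h, hs⟩)
      · exact ⟨Or.inl h, hs⟩
      · exact ⟨Or.inr h, hs⟩
  · simp only [Subgraph.deleteVerts_adj, Subgraph.verts_sup, Subgraph.sup_adj,
      Set.mem_union]
    constructor
    · rintro ⟨hx, hxs, hy, hys, h | h⟩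
      · exact Or.inl ⟨h.fst_mem, hxs, h.snd_mem, hys, h⟩
      · exact Or.inr ⟨h.fst_mem, hxs, h.snd_mem, hys, h⟩
    · rintro (⟨hx, hxs, hy, hys, h⟩ | ⟨hx, hxs, hy, hys, h⟩)
      · exact ⟨Or.inl hx, hxs, Or.inl hy, hys, Or.inl h⟩
      · exact ⟨Or.inr hx, hxs, Or.inr hy, hys, Or.inr h⟩

lemma deleteVerts_of_not_mem {G : SimpleGraph V} (H : G.Subgraph) {z : V}
    (h : z ∉ H.verts) : H.deleteVerts {z} = H := by
  ext x y
  · simp only [Subgraph.deleteVerts_verts, Set.mem_diff, Set.mem_singleton_iff]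
    exact ⟨fun h => h.1, fun hx => ⟨hx, fun he => h (he ▸ hx)⟩⟩
  · simp only [Subgraph.deleteVerts_adj, Set.mem_singleton_iff]
    refine ⟨fun h => h.2.2.2.2, fun ha => ⟨ha.fst_mem, ?_, ha.snd_mem, ?_, ha⟩⟩
    · exact fun he => h (he ▸ ha.fst_mem)
    · exact fun he => h (he ▸ ha.snd_mem)
-- delete head of a path's subgraph
lemma path_deleteHead {G : SimpleGraph V} {u t : V} (p : G.Walk u t)
    (hp : p.IsPath) (hne : u ≠ t) :
    ((p.toSubgraph.deleteVerts {u}).coe.Connected) ∧ t ∈ (p.toSubgraph.deleteVerts {u}).verts := by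
  cases p with
  | nil => exact absurd rfl hne
  | @cons _ x _ h p₁ =>
    have hxne : u ≠ x := h.ne
    have hu1 : u ∉ p₁.support := by
      have := hp.support_nodup
      simp only [SimpleGraph.Walk.support_cons, List.nodup_cons] at this
      exact this.1
    have hs : (G.subgraphOfAdj h).deleteVerts {u} ⊔ p₁.toSubgraph
        = (SimpleGraph.Walk.cons h p₁).toSubgraph.deleteVerts {u} := by
      rw [SimpleGraph.Walk.toSubgraph, sup_deleteVerts,
        deleteVerts_of_not_mem p₁.toSubgraph (by
          rw [SimpleGraph.Walk.verts_toSubgraph]; exact hu1)]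
    constructor
    · rw [← hs]
      have h1 : ((G.subgraphOfAdj h).deleteVerts {u}).Connected := by
        rw [Subgraph.connected_iff']
        refine singleton_connected _ x ?_
        ext z
        simp only [Subgraph.deleteVerts_verts, subgraphOfAdj_verts, Set.mem_diff,
          Set.mem_insert_iff, Set.mem_singleton_iff]
        constructor
        · rintro ⟨rfl | rfl, hz⟩
          · exact absurd rfl hz
          · rfl
        · rintro rfl; exact ⟨Or.inr rfl, fun hz => hxne hz.symm⟩
      have h2 : p₁.toSubgraph.Connected := p₁.toSubgraph_connected
      have := Subgraph.connected_sup h1.preconnected h2.preconnected ⟨x, by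
        simp only [Subgraph.verts_inf, Subgraph.deleteVerts_verts, subgraphOfAdj_verts,
          Set.mem_inter_iff, Set.mem_diff, Set.mem_insert_iff, Set.mem_singleton_iff,
          SimpleGraph.Walk.verts_toSubgraph, Set.mem_setOf_eq]
        refine ⟨⟨by tauto, fun hz => hxne hz.symm⟩, p₁.start_mem_support⟩⟩
      exact this.coe
    · simp only [Subgraph.deleteVerts_verts, Set.mem_diff, Set.mem_singleton_iff,
        SimpleGraph.Walk.mem_verts_toSubgraph]
      exact ⟨by simp, fun he => hne he.symm⟩

lemma path_deleteLast {G : SimpleGraph V} {u t : V} (p : G.Walk u t)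
    (hp : p.IsPath) (hne : u ≠ t) :
    ((p.toSubgraph.deleteVerts {t}).coe.Connected) ∧ u ∈ (p.toSubgraph.deleteVerts {t}).verts := by
  have := path_deleteHead p.reverse hp.reverse (Ne.symm hne)
  rwa [SimpleGraph.Walk.toSubgraph_reverse] at this
lemma Bdel_connected {G : SimpleGraph V} {B : G.Subgraph} (hB : CutFree G B)
    {a b : V} (ha : a ∈ B.verts) (hb : b ∈ B.verts) (hab : a ≠ b) (z : V) :
    (B.deleteVerts {z}).coe.Connected := by
  by_cases hz : z ∈ B.verts
  · refine (hB.2 z hz).resolve_left fun he => ?_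
    have h1 : a = z := (Set.ext_iff.mp he _).mp ha
    have h2 : b = z := (Set.ext_iff.mp he _).mp hb
    exact hab (h1.trans h2.symm)
  · rw [deleteVerts_of_not_mem _ hz]; exact hB.1

lemma mem_del {G : SimpleGraph V} {B : G.Subgraph} {x z : V} (hx : x ∈ B.verts)
    (hxz : x ≠ z) : x ∈ (B.deleteVerts {z}).verts := by
  simp only [Subgraph.deleteVerts_verts, Set.mem_diff, Set.mem_singleton_iff]
  exact ⟨hx, hxz⟩

lemma sup_conn {G : SimpleGraph V} {H K : G.Subgraph} (hH : H.coe.Connected)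
    (hK : K.coe.Connected) {x : V} (hx : x ∈ H.verts) (hx' : x ∈ K.verts) :
    (H ⊔ K).coe.Connected := by
  have := Subgraph.connected_sup (Subgraph.connected_iff'.mpr hH).preconnected (Subgraph.connected_iff'.mpr hK).preconnected
    ⟨x, by simp only [Subgraph.verts_inf, Set.mem_inter_iff]; exact ⟨hx, hx'⟩⟩
  exact this.coe

lemma earCutFree {G : SimpleGraph V} {B : G.Subgraph} (hB : CutFree G B)
    {a d : V} (ha : a ∈ B.verts) (hd : d ∈ B.verts) (had : a ≠ d)
    (p : G.Walk a d) (hp : p.IsPath)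
    (hint : ∀ z ∈ p.support, z ∈ B.verts → z = a ∨ z = d) :
    CutFree G (B ⊔ p.toSubgraph) := by
  classical
  constructor
  · exact sup_conn hB.1 (p.toSubgraph_connected).coe ha (by
      rw [SimpleGraph.Walk.verts_toSubgraph]; exact p.start_mem_support)
  intro z _
  right
  rw [sup_deleteVerts]
  by_cases hzs : z ∈ p.support
  · rcases eq_or_ne z a with rfl | hza
    · -- z = a
      obtain ⟨hc, hdmem⟩ := path_deleteHead p hp had
      exact sup_conn (Bdel_connected hB ha hd had z) hc (mem_del hd (Ne.symm had)) hdmem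
    · rcases eq_or_ne z d with rfl | hzd
      · obtain ⟨hc, hamem⟩ := path_deleteLast p hp had
        exact sup_conn (Bdel_connected hB ha hd had z) hc (mem_del ha had) hamem
      · -- interior vertex, z ∉ B
        have hzB : z ∉ B.verts := fun hzB => by
          rcases hint z hzs hzB with h | h
          exacts [hza h, hzd h]
        have hBdel : B.deleteVerts {z} = B := deleteVerts_of_not_mem _ hzB
        have hspec := (p.take_spec hzs).symm
        set p₁ := p.takeUntil z hzs with hp₁
        set p₂ := p.dropUntil z hzs with hp₂
        have hp1 : p₁.IsPath := hp.takeUntil hzs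
        have hp2 : p₂.IsPath := hp.dropUntil hzs
        obtain ⟨hc1, hamem⟩ := path_deleteLast p₁ hp1 (Ne.symm hza)
        obtain ⟨hc2, hdmem⟩ := path_deleteHead p₂ hp2 hzd
        have hps : p.toSubgraph = p₁.toSubgraph ⊔ p₂.toSubgraph := by
          rw [hspec, SimpleGraph.Walk.toSubgraph_append]
        rw [hps, sup_deleteVerts, hBdel, ← sup_assoc]
        refine sup_conn (sup_conn hB.1 hc1 ha hamem) hc2 ?_ hdmem
        exact Or.inl hd
  · have hpdel : p.toSubgraph.deleteVerts {z} = p.toSubgraph :=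
      deleteVerts_of_not_mem _ (by rw [SimpleGraph.Walk.verts_toSubgraph]; exact hzs)
    rw [hpdel]
    have hane : a ≠ z := fun h => hzs (h ▸ p.start_mem_support)
    refine sup_conn (Bdel_connected hB ha hd had z) (p.toSubgraph_connected).coe
      (mem_del ha hane) ?_
    rw [SimpleGraph.Walk.verts_toSubgraph]; exact p.start_mem_support
lemma blockAdj {G : SimpleGraph V} {B : G.Subgraph} (hB : IsBlock G B)
    {a c : V} (ha : a ∈ B.verts) (hc : c ∈ B.verts) (h : G.Adj a c) : B.Adj a c := by
  have hp : (SimpleGraph.Walk.cons h SimpleGraph.Walk.nil).IsPath := by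
    simp [SimpleGraph.Walk.cons_isPath_iff, h.ne]
  have hcf := earCutFree hB.1 ha hc h.ne _ hp (by
    intro z hz _
    simp only [SimpleGraph.Walk.support_cons, SimpleGraph.Walk.support_nil,
      List.mem_cons, List.mem_singleton] at hz
    rcases hz with rfl | rfl | h'
    · exact Or.inl rfl
    · exact Or.inr rfl
    · exact absurd h' List.not_mem_nil)
  have heq := hB.2 _ le_sup_left hcf
  rw [← heq]
  exact Or.inr (by simp [SimpleGraph.Walk.toSubgraph])

lemma keyLemma {G : SimpleGraph V} {B : G.Subgraph} (hB : IsBlock G B)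
    {a w d : V} (ha : a ∈ B.verts) (hd : d ∈ B.verts) (haw : G.Adj a w)
    (hw : w ∉ B.verts) (C₁ : G.Walk w d) (haC : a ∉ C₁.support)
    (hC : ∀ z ∈ C₁.support, z ∈ B.verts → z = d) : a = d := by
  classical
  by_contra had
  set C : G.Walk a d := SimpleGraph.Walk.cons haw C₁ with hCdef
  have hpp : C.bypass.IsPath := C.bypass_isPath
  have hsup : C.bypass.support ⊆ C.support := C.support_bypass_subset
  have hedg : C.bypass.edges ⊆ C.edges := C.edges_bypass_subset
  obtain ⟨w', hw', p₁, hpe⟩ := SimpleGraph.Walk.exists_eq_cons_of_ne had C.bypass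
  have hedge : s(a, w') ∈ C.edges := hedg (by rw [hpe]; simp)
  have hww : w' = w := by
    rw [hCdef, SimpleGraph.Walk.edges_cons] at hedge
    rcases List.mem_cons.mp hedge with h' | h'
    · exact Sym2.congr_right.mp h'
    · exact absurd (C₁.fst_mem_support_of_mem_edges h') haC
  subst hww
  have hint : ∀ z ∈ C.bypass.support, z ∈ B.verts → z = a ∨ z = d := by
    intro z hz hzB
    have := hsup hz
    rw [hCdef, SimpleGraph.Walk.support_cons] at this
    rcases List.mem_cons.mp this with rfl | h'
    · exact Or.inl rfl
    · exact Or.inr (hC z h' hzB)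
  have hcf := earCutFree hB.1 ha hd had C.bypass hpp hint
  have heq := hB.2 _ le_sup_left hcf
  apply hw
  have hwmem : w' ∈ (B ⊔ C.bypass.toSubgraph).verts := by
    refine Or.inr ?_
    rw [SimpleGraph.Walk.verts_toSubgraph, hpe]
    show w' ∈ (SimpleGraph.Walk.cons hw' p₁).support
    rw [SimpleGraph.Walk.support_cons]
    exact List.mem_cons_of_mem _ p₁.start_mem_support
  rwa [heq] at hwmem

lemma firstB {G : SimpleGraph V} (Bv : Set V) :
    ∀ {s t : V} (W : G.Walk s t), (∃ z ∈ W.support, z ∈ Bv) →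
    ∃ d, d ∈ Bv ∧ ∃ (W₁ : G.Walk s d) (W₂ : G.Walk d t), W = W₁.append W₂ ∧
      ∀ z ∈ W₁.support, z ∈ Bv → z = d := by
  intro s t W
  induction W with
  | nil =>
    rintro ⟨z, hz, hzB⟩
    simp only [SimpleGraph.Walk.support_nil, List.mem_singleton] at hz
    subst hz
    exact ⟨z, hzB, SimpleGraph.Walk.nil, SimpleGraph.Walk.nil, rfl, by
      intro y hy _
      simpa using hy⟩
  | @cons s c t h W' ih =>
    rintro ⟨z, hz, hzB⟩
    by_cases hs : s ∈ Bv
    · exact ⟨s, hs, SimpleGraph.Walk.nil, SimpleGraph.Walk.cons h W', rfl, by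
        intro y hy _; simpa using hy⟩
    · have hex : ∃ z ∈ W'.support, z ∈ Bv := by
        rw [SimpleGraph.Walk.support_cons] at hz
        rcases List.mem_cons.mp hz with rfl | h'
        · exact absurd hzB hs
        · exact ⟨z, h', hzB⟩
      obtain ⟨d, hdB, W₁, W₂, heq, hcond⟩ := ih hex
      refine ⟨d, hdB, SimpleGraph.Walk.cons h W₁, W₂, by rw [SimpleGraph.Walk.cons_append, heq], ?_⟩
      intro y hy hyB
      rw [SimpleGraph.Walk.support_cons] at hy
      rcases List.mem_cons.mp hy with rfl | h'
      · exact absurd hyB hs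
      · exact hcond y h' hyB

lemma lastB {G : SimpleGraph V} (Bv : Set V) :
    ∀ {s t : V} (W : G.Walk s t), (∃ z ∈ W.support, z ∈ Bv) →
    ∃ v, v ∈ Bv ∧ ∃ (W₁ : G.Walk s v) (W₂ : G.Walk v t), W = W₁.append W₂ ∧
      ∀ z ∈ W₂.support, z ∈ Bv → z = v := by
  intro s t W
  induction W with
  | nil =>
    rintro ⟨z, hz, hzB⟩
    simp only [SimpleGraph.Walk.support_nil, List.mem_singleton] at hz
    subst hz
    exact ⟨z, hzB, SimpleGraph.Walk.nil, SimpleGraph.Walk.nil, rfl, by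
      intro y hy _; simpa using hy⟩
  | @cons s c t h W' ih =>
    rintro ⟨z, hz, hzB⟩
    by_cases hW' : ∃ z ∈ W'.support, z ∈ Bv
    · obtain ⟨v, hvB, W₁, W₂, heq, hcond⟩ := ih hW'
      exact ⟨v, hvB, SimpleGraph.Walk.cons h W₁, W₂, by rw [SimpleGraph.Walk.cons_append, heq],
        hcond⟩
    · have hs : s ∈ Bv := by
        rw [SimpleGraph.Walk.support_cons] at hz
        rcases List.mem_cons.mp hz with rfl | h'
        · exact hzB
        · exact absurd ⟨z, h', hzB⟩ hW'
      refine ⟨s, hs, SimpleGraph.Walk.nil, SimpleGraph.Walk.cons h W', rfl, ?_⟩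
      intro y hy hyB
      rw [SimpleGraph.Walk.support_cons] at hy
      rcases List.mem_cons.mp hy with rfl | h'
      · rfl
      · exact absurd ⟨y, h', hyB⟩ hW'
lemma edge_cutFree {G : SimpleGraph V} {a c : V} (h : G.Adj a c) :
    CutFree G (G.subgraphOfAdj h) := by
  refine ⟨(Subgraph.subgraphOfAdj_connected h).coe, ?_⟩
  intro z hz
  right
  simp only [subgraphOfAdj_verts, Set.mem_insert_iff, Set.mem_singleton_iff] at hz
  have hverts : ∀ (p q : V), p ≠ q → ({p, q} : Set V) \ {p} = {q} := by
    intro p q hpq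
    ext w
    simp only [Set.mem_diff, Set.mem_insert_iff, Set.mem_singleton_iff]
    constructor
    · rintro ⟨rfl | rfl, hw⟩
      · exact absurd rfl hw
      · rfl
    · rintro rfl; exact ⟨Or.inr rfl, fun hw => hpq hw.symm⟩
  rcases hz with rfl | rfl
  · refine singleton_connected _ c ?_
    simp only [Subgraph.deleteVerts_verts, subgraphOfAdj_verts]
    exact hverts z c h.ne
  · refine singleton_connected _ a ?_
    simp only [Subgraph.deleteVerts_verts, subgraphOfAdj_verts]
    rw [Set.pair_comm]
    exact hverts z a h.ne'

lemma exists_block_ge [Finite V] {G : SimpleGraph V} {H : G.Subgraph} (hH : CutFree G H) :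
    ∃ B, IsBlock G B ∧ H ≤ B := by
  obtain ⟨m, hm, hmax⟩ := Set.Finite.exists_maximalFor id {H' | CutFree G H' ∧ H ≤ H'}
    (Set.toFinite _) ⟨H, hH, le_rfl⟩
  exact ⟨m, ⟨hm.1, fun H' hle hcf => le_antisymm (hmax ⟨hcf, hm.2.trans hle⟩ hle) hle⟩, hm.2⟩

lemma blockEq {G : SimpleGraph V} {B₁ B₂ : G.Subgraph} (h₁ : IsBlock G B₁)
    (h₂ : IsBlock G B₂) {a b : V} (hab : a ≠ b) (ha1 : a ∈ B₁.verts)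
    (hb1 : b ∈ B₁.verts) (ha2 : a ∈ B₂.verts) (hb2 : b ∈ B₂.verts) : B₁ = B₂ := by
  have hcf : CutFree G (B₁ ⊔ B₂) := by
    refine ⟨sup_conn h₁.1.1 h₂.1.1 ha1 ha2, ?_⟩
    intro z _
    right
    rw [sup_deleteVerts]
    rcases eq_or_ne z a with rfl | hza
    · exact sup_conn (Bdel_connected h₁.1 ha1 hb1 hab z) (Bdel_connected h₂.1 ha2 hb2 hab z)
        (mem_del hb1 (Ne.symm hab)) (mem_del hb2 (Ne.symm hab))
    · exact sup_conn (Bdel_connected h₁.1 ha1 hb1 hab z) (Bdel_connected h₂.1 ha2 hb2 hab z)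
        (mem_del ha1 (Ne.symm hza)) (mem_del ha2 (Ne.symm hza))
  have e1 := h₁.2 _ le_sup_left hcf
  have e2 := h₂.2 _ le_sup_right hcf
  exact e1.symm.trans e2
lemma proj {G : SimpleGraph V} {B : G.Subgraph} (hB : IsBlock G B)
    (F' : Set (Sym2 ↥B.verts)) {u v : V} (hu : u ∈ B.verts) (hv : v ∈ B.verts)
    (hr : (G.deleteEdges (Sym2.map Subtype.val '' F')).Reachable u v) :
    (B.coe.deleteEdges F').Reachable ⟨u, hu⟩ ⟨v, hv⟩ := by
  set F : Set (Sym2 V) := Sym2.map Subtype.val '' F' with hF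
  obtain ⟨W⟩ := hr
  suffices H : ∀ n, ∀ (a b : V) (ha : a ∈ B.verts) (hb : b ∈ B.verts)
      (W : (G.deleteEdges F).Walk a b), W.length ≤ n →
      (B.coe.deleteEdges F').Reachable ⟨a, ha⟩ ⟨b, hb⟩ by
    exact H W.length u v hu hv W le_rfl
  intro n
  induction n with
  | zero =>
    intro a b ha hb W hlen
    have hab : a = b := SimpleGraph.Walk.eq_of_length_eq_zero (Nat.le_zero.mp hlen)
    subst hab
    exact Reachable.refl _
  | succ n ih =>
    intro a b ha hb W hlen
    cases W with
    | nil => exact Reachable.refl _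
    | @cons _ c _ h W₁ =>
      have hGadj : G.Adj a c ∧ s(a, c) ∉ F := by rwa [SimpleGraph.deleteEdges_adj] at h
      have hlen1 : W₁.length ≤ n := by
        simp only [SimpleGraph.Walk.length_cons] at hlen; omega
      by_cases hcB : c ∈ B.verts
      · have hBadj : B.Adj a c := blockAdj hB ha hcB hGadj.1
        have hstep : (B.coe.deleteEdges F').Adj ⟨a, ha⟩ ⟨c, hcB⟩ := by
          rw [SimpleGraph.deleteEdges_adj]
          refine ⟨hBadj, fun hmem => hGadj.2 ?_⟩
          exact ⟨_, hmem, by simp⟩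
        exact hstep.reachable.trans (ih c b hcB hb W₁ hlen1)
      · obtain ⟨e, heB, W₂, W₃, heq, hcond⟩ := firstB B.verts W₁
          ⟨b, W₁.end_mem_support, hb⟩
        have hsub : ∀ e' ∈ W₂.edges, e' ∈ G.edgeSet := fun e' he' =>
          (SimpleGraph.edgeSet_mono (SimpleGraph.deleteEdges_le F)) (W₂.edges_subset_edgeSet he')
        have hae : a = e := by
          by_cases haW : a ∈ W₂.support
          · exact hcond a haW ha
          · refine keyLemma hB ha heB hGadj.1 hcB (W₂.transfer G hsub) ?_ ?_
            · rwa [SimpleGraph.Walk.support_transfer]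
            · rw [SimpleGraph.Walk.support_transfer]; exact hcond
        subst hae
        have hlen3 : W₃.length ≤ n := by
          have := SimpleGraph.Walk.length_append W₂ W₃
          rw [← heq] at this
          omega
        exact ih a b ha hb W₃ hlen3
lemma pairSelect [Finite V] {G : SimpleGraph V} (hconn : G.Connected) {x y : V}
    (hxy : x ≠ y) :
    ∃ B, IsBlock G B ∧ ∃ u v, u ∈ B.verts ∧ v ∈ B.verts ∧ u ≠ v ∧
      ∀ W : G.Walk x y, u ∈ W.support ∧ v ∈ W.support := by
  classical
  obtain ⟨W0⟩ := hconn.preconnected x y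
  have hP : W0.bypass.IsPath := W0.bypass_isPath
  obtain ⟨c, hxc, P₁, hPe⟩ := SimpleGraph.Walk.exists_eq_cons_of_ne hxy W0.bypass
  obtain ⟨B, hB, hle⟩ := exists_block_ge (edge_cutFree hxc)
  have hxB : x ∈ B.verts := hle.1 (by simp)
  have hcB : c ∈ B.verts := hle.1 (by simp)
  by_cases hyB : y ∈ B.verts
  · exact ⟨B, hB, x, y, hxB, hyB, hxy, fun W => ⟨W.start_mem_support, W.end_mem_support⟩⟩
  rw [hPe] at hP
  rw [SimpleGraph.Walk.cons_isPath_iff] at hP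
  obtain ⟨hP1path, hxP₁⟩ := hP
  obtain ⟨v, hvB, A, R, hA, hRcond⟩ := lastB B.verts P₁ ⟨c, P₁.start_mem_support, hcB⟩
  have hvP₁ : v ∈ P₁.support := by
    rw [hA]
    exact (SimpleGraph.Walk.mem_support_append_iff _ _).mpr (Or.inr R.start_mem_support)
  have hvx : v ≠ x := fun h => hxP₁ (h ▸ hvP₁)
  rw [hA] at hP1path
  have hRpath : R.IsPath := hP1path.of_append_right
  have hvy : v ≠ y := fun h => hyB (h ▸ hvB)
  refine ⟨B, hB, x, v, hxB, hvB, Ne.symm hvx, fun W => ⟨W.start_mem_support, ?_⟩⟩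
  by_contra hvW
  have hQpath : W.bypass.IsPath := W.bypass_isPath
  have hvQ : v ∉ W.bypass.support := fun h => hvW (W.support_bypass_subset h)
  obtain ⟨e, heB, A', R', hA', hRcond'⟩ := lastB B.verts W.bypass
    ⟨x, W.bypass.start_mem_support, hxB⟩
  have heQ : e ∈ W.bypass.support := by
    rw [hA']
    exact (SimpleGraph.Walk.mem_support_append_iff _ _).mpr (Or.inr R'.start_mem_support)
  have hed : e ≠ v := fun h => hvQ (h ▸ heQ)
  obtain ⟨w, hvw, R₀, hRe⟩ := SimpleGraph.Walk.exists_eq_cons_of_ne hvy R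
  rw [hRe, SimpleGraph.Walk.cons_isPath_iff] at hRpath
  obtain ⟨hR₀path, hvR₀⟩ := hRpath
  have hwR : w ∈ R.support := by
    rw [hRe, SimpleGraph.Walk.support_cons]
    exact List.mem_cons_of_mem _ R₀.start_mem_support
  have hwB : w ∉ B.verts := by
    intro hwB'
    exact hvw.ne' (hRcond w hwR hwB')
  have hR'Q : ∀ z ∈ R'.support, z ∈ W.bypass.support := by
    intro z hz
    rw [hA']
    exact (SimpleGraph.Walk.mem_support_append_iff _ _).mpr (Or.inr hz)
  have hkey : v = e := by
    refine keyLemma hB hvB heB hvw hwB (R₀.append R'.reverse) ?_ ?_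
    · intro hmem
      rcases (SimpleGraph.Walk.mem_support_append_iff _ _).mp hmem with h' | h'
      · exact hvR₀ h'
      · rw [SimpleGraph.Walk.support_reverse] at h'
        exact hvQ (hR'Q v (List.mem_reverse.mp h'))
    · intro z hz hzB
      rcases (SimpleGraph.Walk.mem_support_append_iff _ _).mp hz with h' | h'
      · have hzR : z ∈ R.support := by
          rw [hRe, SimpleGraph.Walk.support_cons]
          exact List.mem_cons_of_mem _ h'
        have := hRcond z hzR hzB
        subst this
        exact absurd h' hvR₀
      · rw [SimpleGraph.Walk.support_reverse] at h'
        exact hRcond' z (List.mem_reverse.mp h') hzB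
  exact hed hkey.symm
lemma exists_coloring {W : Type*} [Finite W] (H : SimpleGraph W) :
    {k | ∃ c : Sym2 W → ℕ, (∀ e ∈ H.edgeSet, c e < k) ∧
      ∀ x y : W, x ≠ y → ∃ F, IsProperSepCut H c F x y}.Nonempty := by
  classical
  haveI : Fintype (Sym2 W) := Fintype.ofFinite _
  obtain ⟨c, hc⟩ := exists_injective_nat (Sym2 W)
  refine ⟨(Finset.univ.sup c) + 1, c, ?_, ?_⟩
  · intro e _
    exact Nat.lt_succ_of_le (Finset.le_sup (Finset.mem_univ e))
  · intro x y hxy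
    refine ⟨{e | e ∈ H.edgeSet ∧ x ∈ e}, ⟨fun e he => he.1, ?_⟩, ?_⟩
    · rintro ⟨Wk⟩
      cases Wk with
      | nil => exact hxy rfl
      | cons h _ =>
        rw [SimpleGraph.deleteEdges_adj] at h
        exact h.2 ⟨H.mem_edgeSet.mpr h.1, Sym2.mem_mk_left _ _⟩
    · intro e₁ _ e₂ _ hadj
      exact fun hce => hadj.1 (hc hce)

lemma pd_subgraph_le [Finite V] (G : SimpleGraph V) (H : G.Subgraph) :
    pd H.coe ≤ pd G := by
  classical
  have hmem := Nat.sInf_mem (exists_coloring G)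
  obtain ⟨c, hc1, hc2⟩ := hmem
  apply Nat.sInf_le
  refine ⟨fun e => c (Sym2.map Subtype.val e), ?_, ?_⟩
  · intro e he
    apply hc1
    induction e with
    | _ a b =>
      rw [SimpleGraph.mem_edgeSet] at he
      rw [Sym2.map_pair_eq, SimpleGraph.mem_edgeSet]
      exact H.adj_sub he
  · intro x y hxy
    obtain ⟨F, ⟨⟨hFsub, hFreach⟩, hFprop⟩⟩ := hc2 ↑x ↑y (fun h => hxy (Subtype.ext h))
    refine ⟨{e | e ∈ H.coe.edgeSet ∧ Sym2.map Subtype.val e ∈ F}, ⟨⟨fun e he => he.1, ?_⟩, ?_⟩⟩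
    · intro hre
      apply hFreach
      have hadj : ∀ {u v' : ↥H.verts},
          (H.coe.deleteEdges {e | e ∈ H.coe.edgeSet ∧ Sym2.map Subtype.val e ∈ F}).Adj u v' →
          (G.deleteEdges F).Adj ↑u ↑v' := by
        intro u v' h
        rw [SimpleGraph.deleteEdges_adj] at h ⊢
        refine ⟨H.adj_sub h.1, fun hmem => h.2 ⟨H.coe.mem_edgeSet.mpr h.1, ?_⟩⟩
        rwa [Sym2.map_pair_eq]
      exact hre.map ⟨Subtype.val, hadj⟩
    · intro e₁ he₁ e₂ he₂ hadj
      apply hFprop _ he₁.2 _ he₂.2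
      refine ⟨fun h => hadj.1 (Sym2.map.injective Subtype.val_injective h), ?_⟩
      obtain ⟨z, hz1, hz2⟩ := hadj.2
      exact ⟨↑z, Sym2.mem_map.mpr ⟨z, hz1, rfl⟩, Sym2.mem_map.mpr ⟨z, hz2, rfl⟩⟩
lemma coe_edge_map {G : SimpleGraph V} (H : G.Subgraph) {e' : Sym2 ↥H.verts}
    (he' : e' ∈ H.coe.edgeSet) : Sym2.map Subtype.val e' ∈ G.edgeSet := by
  revert he'
  induction e' using Sym2.ind with
  | _ a b =>
    intro he'
    rw [SimpleGraph.mem_edgeSet] at he'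
    rw [Sym2.map_pair_eq, SimpleGraph.mem_edgeSet]
    exact H.adj_sub he'

noncomputable def cGlob {V : Type*} (G : SimpleGraph V)
    (col : ∀ B : G.Subgraph, IsBlock G B → Sym2 ↥B.verts → ℕ) : Sym2 V → ℕ :=
  fun e => sInf {n | ∃ (B : G.Subgraph) (hB : IsBlock G B) (e' : Sym2 ↥B.verts),
    e' ∈ B.coe.edgeSet ∧ Sym2.map Subtype.val e' = e ∧ n = col B hB e'}

lemma cGlob_eq {G : SimpleGraph V}
    (col : ∀ B : G.Subgraph, IsBlock G B → Sym2 ↥B.verts → ℕ)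
    {B : G.Subgraph} (hB : IsBlock G B) (e' : Sym2 ↥B.verts)
    (he' : e' ∈ B.coe.edgeSet) :
    cGlob G col (Sym2.map Subtype.val e') = col B hB e' := by
  revert he'
  induction e' using Sym2.ind with
  | _ u v =>
    intro he'
    have hBadj : B.Adj ↑u ↑v := (B.coe.mem_edgeSet).mp he'
    have hne : (↑u : V) ≠ ↑v := (B.adj_sub hBadj).ne
    have hset : {n | ∃ (B₂ : G.Subgraph) (hB₂ : IsBlock G B₂) (e₂ : Sym2 ↥B₂.verts),
        e₂ ∈ B₂.coe.edgeSet ∧ Sym2.map Subtype.val e₂ = Sym2.map Subtype.val s(u, v) ∧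
        n = col B₂ hB₂ e₂} = {col B hB s(u, v)} := by
      ext n
      simp only [Set.mem_setOf_eq, Set.mem_singleton_iff]
      constructor
      · rintro ⟨B₂, hB₂, e₂, he₂, hmap, rfl⟩
        revert he₂ hmap
        induction e₂ using Sym2.ind with
        | _ u₂ v₂ =>
          intro he₂ hmap
          rw [Sym2.map_pair_eq, Sym2.map_pair_eq] at hmap
          have h4 : (↑u : V) ∈ B₂.verts ∧ (↑v : V) ∈ B₂.verts := by
            rcases Sym2.eq_iff.mp hmap with ⟨h1, h2⟩ | ⟨h1, h2⟩
            · exact ⟨h1 ▸ u₂.2, h2 ▸ v₂.2⟩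
            · exact ⟨h2 ▸ v₂.2, h1 ▸ u₂.2⟩
          have hBeq : B₂ = B := blockEq hB₂ hB hne h4.1 h4.2 u.2 v.2
          subst hBeq
          have hinj : s(u₂, v₂) = s(u, v) := by
            apply Sym2.map.injective Subtype.val_injective
            rw [Sym2.map_pair_eq, Sym2.map_pair_eq]
            exact hmap
          rw [hinj]
      · rintro rfl
        exact ⟨B, hB, s(u, v), he', rfl, rfl⟩
    rw [cGlob, hset, csInf_singleton]

theorem stmt8 {V : Type*} [Fintype V] (G : SimpleGraph V)
    (hconn : G.Connected) (hnt : Nontrivial V) :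
    pd G = sSup {n : ℕ | ∃ H : G.Subgraph, IsBlock G H ∧ n = pd H.coe} := by
  classical
  set S := {n : ℕ | ∃ H : G.Subgraph, IsBlock G H ∧ n = pd H.coe} with hS
  -- S is nonempty
  obtain ⟨x, y, hxy⟩ := hnt
  obtain ⟨W0⟩ := hconn.preconnected x y
  obtain ⟨c0, hxc0, _, _⟩ := SimpleGraph.Walk.exists_eq_cons_of_ne hxy W0
  obtain ⟨B0, hB0, _⟩ := exists_block_ge (edge_cutFree hxc0)
  have hSne : S.Nonempty := ⟨pd B0.coe, B0, hB0, rfl⟩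
  have hbdd : ∀ n ∈ S, n ≤ pd G := by
    rintro n ⟨H, _, rfl⟩
    exact pd_subgraph_le G H
  have hBddAbove : BddAbove S := ⟨pd G, fun n hn => hbdd n hn⟩
  refine le_antisymm ?_ (csSup_le hSne hbdd)
  -- hard direction
  have hBk : ∀ (B : G.Subgraph), IsBlock G B → pd B.coe ≤ sSup S := fun B hB =>
    le_csSup hBddAbove ⟨B, hB, rfl⟩
  have hcols : ∀ (B : G.Subgraph), IsBlock G B → ∃ c : Sym2 ↥B.verts → ℕ,
      (∀ e ∈ B.coe.edgeSet, c e < pd B.coe) ∧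
      ∀ x y : ↥B.verts, x ≠ y → ∃ F, IsProperSepCut B.coe c F x y := by
    intro B _
    exact Nat.sInf_mem (exists_coloring B.coe)
  choose col hcol1 hcol2 using hcols
  apply Nat.sInf_le
  refine ⟨cGlob G col, ?_, ?_⟩
  · -- color bound
    intro e he
    revert he
    induction e using Sym2.ind with
    | _ a b =>
      intro he
      rw [SimpleGraph.mem_edgeSet] at he
      obtain ⟨B, hB, hle⟩ := exists_block_ge (edge_cutFree he)
      have haB : a ∈ B.verts := hle.1 (by simp)
      have hbB : b ∈ B.verts := hle.1 (by simp)
      have hBadj : B.Adj a b := blockAdj hB haB hbB he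
      have he' : (s(⟨a, haB⟩, ⟨b, hbB⟩) : Sym2 ↥B.verts) ∈ B.coe.edgeSet :=
        (B.coe.mem_edgeSet).mpr hBadj
      have hmap : Sym2.map Subtype.val (s(⟨a, haB⟩, ⟨b, hbB⟩) : Sym2 ↥B.verts) = s(a, b) := by
        rw [Sym2.map_pair_eq]
      rw [← hmap, cGlob_eq col hB _ he']
      exact lt_of_lt_of_le (hcol1 B hB _ he') (hBk B hB)
  · -- cuts
    intro x y hxy
    obtain ⟨B, hB, u, v, hu, hv, huv, hWsup⟩ := pairSelect hconn hxy
    obtain ⟨F', ⟨⟨hF'sub, hF'reach⟩, hF'prop⟩⟩ :=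
      hcol2 B hB ⟨u, hu⟩ ⟨v, hv⟩ (fun h => huv (congrArg Subtype.val h))
    refine ⟨Sym2.map Subtype.val '' F', ⟨⟨?_, ?_⟩, ?_⟩⟩
    · rintro e ⟨e', he', rfl⟩
      exact coe_edge_map B (hF'sub he')
    · intro hre
      obtain ⟨Wk⟩ := hre
      have hedges : ∀ e ∈ Wk.edges, e ∈ G.edgeSet := fun e he =>
        (SimpleGraph.edgeSet_mono (SimpleGraph.deleteEdges_le _)) (Wk.edges_subset_edgeSet he)
      obtain ⟨huW, hvW⟩ := hWsup (Wk.transfer G hedges)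
      rw [SimpleGraph.Walk.support_transfer] at huW hvW
      have h1 : (G.deleteEdges (Sym2.map Subtype.val '' F')).Reachable x u := ⟨Wk.takeUntil u huW⟩
      have h2 : (G.deleteEdges (Sym2.map Subtype.val '' F')).Reachable x v := ⟨Wk.takeUntil v hvW⟩
      exact hF'reach (proj hB F' hu hv (h1.symm.trans h2))
    · rintro e₁ ⟨e₁', he₁', rfl⟩ e₂ ⟨e₂', he₂', rfl⟩ hadj
      rw [cGlob_eq col hB e₁' (hF'sub he₁'), cGlob_eq col hB e₂' (hF'sub he₂')]
      apply hF'prop _ he₁' _ he₂'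
      refine ⟨fun h => hadj.1 (congrArg _ h), ?_⟩
      obtain ⟨z, hz1, hz2⟩ := hadj.2
      obtain ⟨z₁, hz₁, hzz₁⟩ := Sym2.mem_map.mp hz1
      obtain ⟨z₂, hz₂, hzz₂⟩ := Sym2.mem_map.mp hz2
      exact ⟨z₁, hz₁, (Subtype.ext (hzz₁.trans hzz₂.symm) : z₁ = z₂) ▸ hz₂⟩
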